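/- Let F be a real quadratic field with discriminant Δ_F and let I be a nonzero fractional ideal of F. If the absolute norm of I⁻¹ is strictly greater than √(Δ_F/3), then I is not 1-reduced. -/

import Mathlib

open NumberField
open scoped nonZeroDivisors

/-- The `u`-length of an element `g` of a real quadratic field with real embeddings `σ, σ'`:
`‖g‖_u = √(u₁²·σ(g)² + u₂²·σ'(g)²)`. -/
noncomputable def normU {F : Type*} [Field F] (σ σ' : F →+* ℝ) (u₁ u₂ : ℝ) (g : F) : ℝ :=
  Real.sqrt (u₁ ^ 2 * (σ g) ^ 2 + u₂ ^ 2 * (σ' g) ^ 2)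

/-- A fractional ideal `I` is reduced if `1 ∈ I` and the only `g ∈ I` with `|σ g| < 1` and
`|σ' g| < 1` is `g = 0`. -/
def IsReducedIdeal {F : Type*} [Field F] [NumberField F] (σ σ' : F →+* ℝ)
    (I : FractionalIdeal (𝓞 F)⁰ F) : Prop :=
  (1 : F) ∈ I ∧ ∀ g ∈ I, |σ g| < 1 → |σ' g| < 1 → g = 0

/-- `1` is primitive in `I`: `1 ∈ I` and no `1/d ∈ I` for an integer `d ≥ 2`. -/
def IsOnePrimitive {F : Type*} [Field F] [NumberField F]
    (I : FractionalIdeal (𝓞 F)⁰ F) : Prop :=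
  (1 : F) ∈ I ∧ ∀ d : ℕ, 2 ≤ d → ((d : F))⁻¹ ∉ I

/-- `I` is 1-reduced: `1` is primitive in `I` and for some metric `u = (u₁, u₂)` of positive
reals, `1` is a shortest nonzero vector of `I` with respect to `‖·‖_u`. -/
def IsOneReduced {F : Type*} [Field F] [NumberField F] (σ σ' : F →+* ℝ)
    (I : FractionalIdeal (𝓞 F)⁰ F) : Prop :=
  IsOnePrimitive I ∧ ∃ u₁ u₂ : ℝ, 0 < u₁ ∧ 0 < u₂ ∧
    ∀ g ∈ I, g ≠ 0 → normU σ σ' u₁ u₂ 1 ≤ normU σ σ' u₁ u₂ g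

open Module

section Helpers

variable {F : Type*} [Field F] [NumberField F]

attribute [local instance] Classical.propDecidable

theorem trace_eq' (hdeg : Module.finrank ℚ F = 2) (σ σ' : F →+* ℝ) (hσ : σ ≠ σ') (x : F) :
    ((Algebra.trace ℚ F x : ℚ) : ℝ) = σ x + σ' x := by
  set α : F →ₐ[ℚ] ℂ := (Complex.ofRealHom.comp σ).toRatAlgHom
  set α' : F →ₐ[ℚ] ℂ := (Complex.ofRealHom.comp σ').toRatAlgHom
  have hne : α ≠ α' := by
    obtain ⟨z, hz⟩ := DFunLike.ne_iff.mp hσ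
    refine DFunLike.ne_iff.mpr ⟨z, ?_⟩
    simp only [α, α', RingHom.toRatAlgHom, AlgHom.coe_mk, RingHom.coe_comp, Function.comp_apply]
    exact fun h => hz (Complex.ofReal_injective h)
  have hcard : Fintype.card (F →ₐ[ℚ] ℂ) = 2 := by
    rw [← Fintype.card_congr (RingHom.equivRatAlgHom (R := F) (S := ℂ)),
      NumberField.Embeddings.card F ℂ, hdeg]
  have huniv : (Finset.univ : Finset (F →ₐ[ℚ] ℂ)) = {α, α'} := by
    symm
    apply Finset.eq_univ_of_card
    rw [Finset.card_pair hne, hcard]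
  have := trace_eq_sum_embeddings (K := ℚ) (L := F) ℂ (x := x)
  rw [huniv, Finset.sum_pair hne] at this
  have h2 : ((Algebra.trace ℚ F x : ℚ) : ℂ) = ((σ x + σ' x : ℝ) : ℂ) := by
    rw [show ((Algebra.trace ℚ F x : ℚ) : ℂ) = algebraMap ℚ ℂ (Algebra.trace ℚ F x) by
      simp [eq_ratCast], this]
    simp [α, α', RingHom.toRatAlgHom]
  exact_mod_cast h2

theorem discr_formula (hdeg : Module.finrank ℚ F = 2) (σ σ' : F →+* ℝ) (hσ : σ ≠ σ')
    (v : Fin 2 → F) :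
    ((Algebra.discr ℚ v : ℚ) : ℝ) =
      (σ (v 0) * σ' (v 1) - σ (v 1) * σ' (v 0)) ^ 2 := by
  rw [Algebra.discr_def, Matrix.det_fin_two]
  have h : ∀ i j : Fin 2, Algebra.traceMatrix ℚ v i j = Algebra.trace ℚ F (v i * v j) := by
    intro i j; rw [Algebra.traceMatrix_apply, Algebra.traceForm_apply]
  push_cast
  rw [h, h, h, h]
  have t := trace_eq' hdeg σ σ' hσ
  rw [t, t, t, t]
  simp only [map_mul]
  ring

theorem ratsmul (σ : F →+* ℝ) (q : ℚ) (x : F) : σ (q • x) = q * σ x := by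
  rw [Rat.smul_def, map_mul, map_ratCast]

theorem delta_base_change (σ σ' : F →+* ℝ) (B : Basis (Fin 2) ℚ F) (v : Fin 2 → F) :
    σ (v 0) * σ' (v 1) - σ (v 1) * σ' (v 0) =
      ((B.det v : ℚ) : ℝ) * (σ (B 0) * σ' (B 1) - σ (B 1) * σ' (B 0)) := by
  have hv : ∀ j, v j = B.toMatrix v 0 j • B 0 + B.toMatrix v 1 j • B 1 := by
    intro j
    rw [← Basis.sum_toMatrix_smul_self B v, Fin.sum_univ_two]
  have hσ : ∀ (τ : F →+* ℝ) j, τ (v j) =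
      (B.toMatrix v 0 j : ℝ) * τ (B 0) + (B.toMatrix v 1 j : ℝ) * τ (B 1) := by
    intro τ j
    rw [hv j, map_add, ratsmul, ratsmul]
  have hdet : ((B.det v : ℚ) : ℝ) =
      (B.toMatrix v 0 0 : ℝ) * (B.toMatrix v 1 1 : ℝ)
        - (B.toMatrix v 0 1 : ℝ) * (B.toMatrix v 1 0 : ℝ) := by
    rw [Basis.det_apply, Matrix.det_fin_two]; push_cast; ring
  rw [hσ σ 0, hσ σ 1, hσ σ' 0, hσ σ' 1, hdet]
  ring

theorem key_ineq {A B s s' : ℝ} (hA : 0 < A) (hB : 0 < B)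
    (h1 : A + B ≤ A * s ^ 2 + B * s' ^ 2)
    (h2 : |A * s + B * s'| ≤ (A + B) / 2) : 3 ≤ (s' - s) ^ 2 := by
  have h2' : (A * s + B * s') ^ 2 ≤ ((A + B) / 2) ^ 2 := by
    rw [← sq_abs]
    exact pow_le_pow_left₀ (abs_nonneg _) h2 2
  have hAB : 0 < A * B := mul_pos hA hB
  have lagrange : A * B * (s' - s) ^ 2 =
      (A + B) * (A * s ^ 2 + B * s' ^ 2) - (A * s + B * s') ^ 2 := by ring
  have h3 : (A + B) * (A + B) ≤ (A + B) * (A * s ^ 2 + B * s' ^ 2) :=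
    mul_le_mul_of_nonneg_left h1 (by positivity)
  have h4 : 3 * (A * B) ≤ A * B * (s' - s) ^ 2 := by nlinarith [sq_nonneg (A - B)]
  exact le_of_mul_le_mul_right (by linarith) hAB


theorem intsmul (σ : F →+* ℝ) (z : ℤ) (x : F) : σ (z • x) = z * σ x := by
  rw [zsmul_eq_mul, map_mul, map_intCast]


end Helpers

/-- Corollary 4.7: a nonzero fractional ideal of a real quadratic field whose inverse has
absolute norm strictly greater than `√(Δ_F/3)` is not 1-reduced. -/
theorem not_oneReduced_of_absNorm_inv_gt {F : Type*} [Field F] [NumberField F]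
    (hdeg : Module.finrank ℚ F = 2)
    (σ σ' : F →+* ℝ) (hσ : σ ≠ σ')
    (I : FractionalIdeal (𝓞 F)⁰ F) (hI0 : I ≠ 0)
    (hnorm : Real.sqrt ((discr F : ℝ) / 3) < (FractionalIdeal.absNorm I⁻¹ : ℝ)) :
    ¬ IsOneReduced σ σ' I := by

  rintro ⟨⟨h1I, hprim⟩, u₁, u₂, hu₁, hu₂, hmin⟩
  classical
  set U : (FractionalIdeal (𝓞 F)⁰ F)ˣ := Units.mk0 I hI0 with hU
  have hcard : Fintype.card (Free.ChooseBasisIndex ℤ (𝓞 F)) = 2 := by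
    rw [← finrank_eq_card_chooseBasisIndex, RingOfIntegers.rank, hdeg]
  have hcardI : Fintype.card (Free.ChooseBasisIndex ℤ U) = 2 := by
    rw [← finrank_eq_card_chooseBasisIndex, fractionalIdeal_rank, RingOfIntegers.rank, hdeg]
  let q := Fintype.equivFinOfCardEq hcard
  let e' := Fintype.equivFinOfCardEq hcardI
  set B : Basis (Fin 2) ℚ F := (integralBasis F).reindex q with hB
  set Bc : Basis (Fin 2) ℚ F := (basisOfFractionalIdeal F U).reindex e' with hBc
  -- membership in I via the span of Bc
  have hspan : ∀ x : F, x ∈ Submodule.span ℤ (Set.range ⇑Bc) ↔ x ∈ I := by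
    intro x
    have hr : Set.range ⇑Bc = Set.range ⇑(basisOfFractionalIdeal F U) := by
      rw [hBc, Basis.coe_reindex]
      exact e'.symm.surjective.range_comp _
    rw [hr, mem_span_basisOfFractionalIdeal]
    exact SetLike.mem_coe
  -- 1 as an integral combination
  obtain ⟨f, hf⟩ := (Submodule.mem_span_range_iff_exists_fun ℤ).mp ((hspan 1).mpr h1I)
  rw [Fin.sum_univ_two] at hf
  set a : ℤ := f 0 with ha
  set b : ℤ := f 1 with hb
  -- gcd a b = 1
  have hgcd : Int.gcd a b = 1 := by
    by_contra hg
    have hg0 : Int.gcd a b ≠ 0 := by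
      intro h0
      obtain ⟨h1, h2⟩ := Int.gcd_eq_zero_iff.mp h0
      rw [h1, h2] at hf
      simp at hf
    have hg2 : 2 ≤ Int.gcd a b := by omega
    set g : ℕ := Int.gcd a b with hgdef
    have hdvda : (g : ℤ) ∣ a := Int.gcd_dvd_left a b
    have hdvdb : (g : ℤ) ∣ b := Int.gcd_dvd_right a b
    set x : F := (a / (g : ℤ)) • Bc 0 + (b / (g : ℤ)) • Bc 1 with hx
    have hgx : ((g : ℤ) : F) * x = 1 := by
      rw [← zsmul_eq_mul, hx, smul_add, smul_smul, smul_smul,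
        Int.mul_ediv_cancel' hdvda, Int.mul_ediv_cancel' hdvdb]
      exact hf
    have hxI : x ∈ I := by
      refine (hspan x).mp (Submodule.add_mem _ (Submodule.smul_mem _ _ ?_)
        (Submodule.smul_mem _ _ ?_)) <;>
        exact Submodule.subset_span (Set.mem_range_self _)
    have hxinv : x = ((g : ℕ) : F)⁻¹ := by
      have : ((g : ℕ) : F) ≠ 0 := by
        exact_mod_cast fun h => hg0 (by exact_mod_cast h)
      field_simp
      rw [← hgx]
      push_cast
      ring
    exact hprim g hg2 (hxinv ▸ hxI)
  -- Bezout coefficients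
  obtain ⟨x, y, hxy⟩ := Int.isCoprime_iff_gcd_eq_one.mpr hgcd
  set e₁ : F := (-y) • Bc 0 + x • Bc 1 with he₁
  have he₁I : e₁ ∈ I := by
    refine (hspan e₁).mp (Submodule.add_mem _ (Submodule.smul_mem _ _ ?_)
      (Submodule.smul_mem _ _ ?_)) <;>
      exact Submodule.subset_span (Set.mem_range_self _)
  -- real linear algebra facts
  have hfR : ∀ τ : F →+* ℝ, (a : ℝ) * τ (Bc 0) + (b : ℝ) * τ (Bc 1) = 1 := by
    intro τ
    have := congrArg τ hf
    rwa [map_add, intsmul, intsmul, map_one τ] at this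
  have heR : ∀ τ : F →+* ℝ, τ e₁ = (-y : ℝ) * τ (Bc 0) + (x : ℝ) * τ (Bc 1) := by
    intro τ
    rw [he₁, map_add, intsmul, intsmul]
    push_cast
    ring
  set δc : ℝ := σ (Bc 0) * σ' (Bc 1) - σ (Bc 1) * σ' (Bc 0) with hδc
  have hδ1 : σ' e₁ - σ e₁ = δc := by
    have hxyR : (x : ℝ) * (a : ℝ) + (y : ℝ) * (b : ℝ) = 1 := by exact_mod_cast hxy
    rw [heR σ, heR σ']
    linear_combination (-((-y : ℝ) * σ' (Bc 0) + (x : ℝ) * σ' (Bc 1))) * hfR σ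
      + ((-y : ℝ) * σ (Bc 0) + (x : ℝ) * σ (Bc 1)) * hfR σ' + δc * hxyR
  -- translation by the round of the Gram ratio
  set A : ℝ := u₁ ^ 2 with hA
  set Bb : ℝ := u₂ ^ 2 with hBb
  have hApos : 0 < A := by positivity
  have hBpos : 0 < Bb := by positivity
  have hABpos : 0 < A + Bb := by positivity
  set μ : ℝ := (A * σ e₁ + Bb * σ' e₁) / (A + Bb) with hμdef
  set k : ℤ := round μ with hk
  set e : F := e₁ - k • (1 : F) with he
  have heI : e ∈ I := (hspan e).mp (Submodule.sub_mem _ ((hspan e₁).mpr he₁I)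
    (Submodule.smul_mem _ _ ((hspan 1).mpr h1I)))
  have hσe : ∀ τ : F →+* ℝ, τ e = τ e₁ - (k : ℝ) := by
    intro τ
    rw [he, map_sub, intsmul, map_one, mul_one]
  have hδe : σ' e - σ e = δc := by
    rw [hσe σ, hσe σ']
    linarith [hδ1]
  -- determinant and discriminant computations
  set N : ℚ := FractionalIdeal.absNorm I with hN
  have hNpos : 0 < N := lt_of_le_of_ne (FractionalIdeal.absNorm_nonneg I)
    (fun h => hI0 (FractionalIdeal.absNorm_eq_zero_iff.mp h.symm))
  have hdet : |(B.det ⇑Bc : ℚ)| = N := by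
    have h1 := det_basisOfFractionalIdeal_eq_absNorm F U (q.trans e'.symm)
    have h2 : FractionalIdeal.absNorm (U : FractionalIdeal (𝓞 F)⁰ F) = N := rfl
    rw [h2] at h1
    rw [← h1]
    congr 1
    rw [hB, Basis.det_reindex]
    congr 1
    funext i
    simp [hBc, Basis.coe_reindex]
  set δB : ℝ := σ (B 0) * σ' (B 1) - σ (B 1) * σ' (B 0) with hδB
  have hdisc : ((discr F : ℤ) : ℝ) = δB ^ 2 := by
    have h1 : ((discr F : ℤ) : ℚ) = Algebra.discr ℚ ⇑B := by
      rw [coe_discr, hB, Basis.coe_reindex, Algebra.discr_reindex]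
    have h2 := discr_formula hdeg σ σ' hσ ⇑B
    rw [← h1] at h2
    rw [show ((discr F : ℤ) : ℝ) = (((discr F : ℤ) : ℚ) : ℝ) by push_cast; ring, h2, hδB]
  have hbase : δc = ((B.det ⇑Bc : ℚ) : ℝ) * δB := delta_base_change σ σ' B ⇑Bc
  have hδsq : δc ^ 2 = ((N : ℝ)) ^ 2 * ((discr F : ℤ) : ℝ) := by
    rw [hbase, mul_pow, hdisc]
    congr 1
    have : (B.det ⇑Bc : ℚ) ^ 2 = N ^ 2 := by rw [← sq_abs, hdet]
    exact_mod_cast this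
  have hδc0 : δc ≠ 0 := by
    intro h0
    rw [h0] at hδsq
    have hd0 : ((discr F : ℤ) : ℝ) ≠ 0 := by
      exact_mod_cast discr_ne_zero F
    have hN0 : ((N : ℝ)) ≠ 0 := by
      have : (0 : ℝ) < (N : ℝ) := by exact_mod_cast hNpos
      exact ne_of_gt this
    exact (mul_ne_zero (pow_ne_zero 2 hN0) hd0) (by linarith)
  have hene : e ≠ 0 := by
    intro h0
    apply hδc0
    rw [← hδe, h0, map_zero, map_zero]
    ring
  -- the geometric inequalities
  have hle := hmin e heI hene
  have h1 : A + Bb ≤ A * (σ e) ^ 2 + Bb * (σ' e) ^ 2 := by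
    simp only [normU, map_one, one_pow, mul_one] at hle
    calc A + Bb = Real.sqrt (u₁ ^ 2 + u₂ ^ 2) ^ 2 := by
          rw [Real.sq_sqrt (by positivity)]
      _ ≤ Real.sqrt (u₁ ^ 2 * (σ e) ^ 2 + u₂ ^ 2 * (σ' e) ^ 2) ^ 2 :=
          pow_le_pow_left₀ (Real.sqrt_nonneg _) hle 2
      _ = A * (σ e) ^ 2 + Bb * (σ' e) ^ 2 := by
          rw [Real.sq_sqrt (by positivity)]
  have h2 : |A * σ e + Bb * σ' e| ≤ (A + Bb) / 2 := by
    have hμe : A * σ e + Bb * σ' e = (A + Bb) * (μ - (k : ℝ)) := by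
      rw [hσe σ, hσe σ', hμdef]
      field_simp
      ring
    rw [hμe, abs_mul, abs_of_pos hABpos]
    have h3 := abs_sub_round μ
    calc (A + Bb) * |μ - (k : ℝ)| ≤ (A + Bb) * (1 / 2) :=
          mul_le_mul_of_nonneg_left h3 (le_of_lt hABpos)
      _ = (A + Bb) / 2 := by ring
  have hkey : 3 ≤ (σ' e - σ e) ^ 2 := key_ineq hApos hBpos h1 h2
  rw [hδe, hδsq] at hkey
  -- final contradiction
  have hNR : 0 < (N : ℝ) := by exact_mod_cast hNpos
  have h4 : 1 / (N : ℝ) ^ 2 ≤ ((discr F : ℤ) : ℝ) / 3 :=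
    (div_le_div_iff₀ (by positivity) (by norm_num)).mpr (by nlinarith)
  have h5 : 1 / (N : ℝ) ≤ Real.sqrt (((discr F : ℤ) : ℝ) / 3) := by
    rw [show (1 : ℝ) / (N : ℝ) ^ 2 = (1 / (N : ℝ)) ^ 2 by ring] at h4
    calc 1 / (N : ℝ) = Real.sqrt ((1 / (N : ℝ)) ^ 2) := (Real.sqrt_sq (by positivity)).symm
      _ ≤ _ := Real.sqrt_le_sqrt h4
  have h6 : FractionalIdeal.absNorm I⁻¹ = N⁻¹ := by
    rw [hN, map_inv₀]
  rw [h6] at hnorm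
  have h7 : ((N⁻¹ : ℚ) : ℝ) = 1 / (N : ℝ) := by push_cast; ring
  rw [h7] at hnorm
  have h8 : ((discr F : ℝ)) = ((discr F : ℤ) : ℝ) := rfl
  rw [h8] at hnorm
  linarith
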